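/- Let d ∈ ℕ and f ∈ L¹([0,1]^d). Then for every k̄ ∈ ℤ^d the half-period cosine coefficient of f at |k̄| and the k̄-th Fourier coefficient of the periodization 𝒫f are related by ∫_{[0,1]^d} f(x) c_{|k̄|}(x) dx = 2^{(|k̄|₀ - d)/2} · 2^{-d/2} ∫_{[-1,1]^d} (𝒫f)(x) e^{-iπ k̄·x} dx, where |k̄|₀ is the number of nonzero entries of k̄ and |k̄| = (|k₁|,…,|k_d|). -/

import Mathlib

open MeasureTheory Set

/-- Univariate half-period cosine functions: `c₀ ≡ 1`, `c_k(x) = √2 cos(πkx)` for `k ≥ 1`. -/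
noncomputable def hpcFun (k : ℕ) (x : ℝ) : ℝ :=
  if k = 0 then 1 else Real.sqrt 2 * Real.cos (Real.pi * (k : ℝ) * x)

/-- Tensorized half-period cosine functions `c_k̄`. -/
noncomputable def hpc (d : ℕ) (k : Fin d → ℕ) (x : Fin d → ℝ) : ℝ :=
  ∏ i, hpcFun (k i) (x i)

/-- `|k̄|₀`: the number of nonzero entries of the multi-index `k̄`. -/
def nzCount (d : ℕ) (k : Fin d → ℤ) : ℕ :=
  (Finset.univ.filter fun i => k i ≠ 0).card


noncomputable def coordEquiv (b : Bool) : ℝ ≃ᵐ ℝ :=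
  if b then MeasurableEquiv.refl ℝ else (Homeomorph.neg ℝ).toMeasurableEquiv

noncomputable def Teqv (d : ℕ) (ε : Fin d → Bool) : (Fin d → ℝ) ≃ᵐ (Fin d → ℝ) :=
  MeasurableEquiv.piCongrRight (fun i => coordEquiv (ε i))

lemma Teqv_apply (d : ℕ) (ε : Fin d → Bool) (x : Fin d → ℝ) (i : Fin d) :
    Teqv d ε x i = if ε i then x i else -(x i) := by
  simp [Teqv, MeasurableEquiv.piCongrRight, coordEquiv]
  cases h : ε i <;> simp [h]

lemma Teqv_mp (d : ℕ) (ε : Fin d → Bool) :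
    MeasurePreserving (Teqv d ε) volume volume := by
  have : MeasurePreserving (fun (x : Fin d → ℝ) i => coordEquiv (ε i) (x i)) volume volume := by
    apply volume_preserving_pi
    intro i
    cases h : ε i <;> simp [coordEquiv, h]
    · exact Measure.measurePreserving_neg _
    · exact MeasurePreserving.id _
  exact this

def SBox (d : ℕ) (ε : Fin d → Bool) : Set (Fin d → ℝ) :=
  univ.pi fun i => if ε i then Icc (0:ℝ) 1 else Icc (-1) 0

lemma SBox_meas (d : ℕ) (ε : Fin d → Bool) : MeasurableSet (SBox d ε) := by
  apply MeasurableSet.univ_pi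
  intro i; cases ε i <;> simp [measurableSet_Icc]

lemma SBox_iUnion (d : ℕ) : (⋃ ε : Fin d → Bool, SBox d ε) = Icc (-1 : Fin d → ℝ) 1 := by
  ext x
  simp only [mem_iUnion, SBox, mem_pi, mem_univ, forall_true_left, true_implies]
  constructor
  · rintro ⟨ε, hε⟩
    rw [← pi_univ_Icc]
    intro i _
    have := hε i
    cases h : ε i <;> rw [h] at this <;> simp at this ⊢ <;>
      constructor <;> linarith [this.1, this.2]
  · intro hx
    rw [← pi_univ_Icc] at hx
    refine ⟨fun i => decide (0 ≤ x i), fun i => ?_⟩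
    have := hx i (mem_univ i)
    by_cases h : 0 ≤ x i <;> simp [h] at this ⊢ <;>
      first
        | linarith [this.1, this.2]
        | (constructor <;> linarith [this.1, this.2, le_of_not_ge h])

lemma SBox_aedisjoint (d : ℕ) :
    Pairwise (Function.onFun (AEDisjoint (volume : Measure (Fin d → ℝ))) (SBox d)) := by
  intro ε ε' hne
  obtain ⟨i, hi⟩ := Function.ne_iff.mp hne
  apply measure_mono_null (t := univ.pi fun j => if j = i then ({0} : Set ℝ) else Icc (-1) 1)
  · rintro x ⟨hx1, hx2⟩ j _
    simp only [SBox, mem_pi, mem_univ, true_implies] at hx1 hx2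
    have h1 := hx1 j
    have h2 := hx2 j
    by_cases hj : j = i
    · subst hj
      simp only [if_pos rfl, mem_singleton_iff]
      cases hb : ε j <;> cases hb' : ε' j <;>
          rw [hb] at h1 <;> rw [hb'] at h2 <;> simp only [Bool.false_eq_true, if_false,
            if_true, mem_Icc] at h1 h2
      · exact absurd (hb.trans hb'.symm) hi
      · exact le_antisymm h1.2 h2.1
      · exact le_antisymm h2.2 h1.1
      · exact absurd (hb.trans hb'.symm) hi
    · simp only [if_neg hj, mem_Icc]
      cases hb : ε j <;> rw [hb] at h1 <;>
        simp only [Bool.false_eq_true, if_false, if_true, mem_Icc] at h1 <;>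
        exact ⟨by linarith [h1.1], by linarith [h1.2]⟩
  · rw [volume_pi, Measure.pi_pi]
    apply Finset.prod_eq_zero (Finset.mem_univ i)
    simp

lemma Teqv_preimage (d : ℕ) (ε : Fin d → Bool) :
    Teqv d ε ⁻¹' SBox d ε = Icc (0 : Fin d → ℝ) 1 := by
  ext x
  rw [← pi_univ_Icc]
  simp only [mem_preimage, SBox, mem_pi, mem_univ, true_implies]
  refine forall_congr' fun i => ?_
  rw [Teqv_apply]
  cases h : ε i <;> simp [h, mem_Icc] <;> constructor <;> intro h' <;>
    exact ⟨by linarith [h'.1, h'.2], by linarith [h'.1, h'.2]⟩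

lemma setIntegral_SBox (d : ℕ) (ε : Fin d → Bool) (F : (Fin d → ℝ) → ℂ) :
    ∫ x in SBox d ε, F x = ∫ x in Icc (0 : Fin d → ℝ) 1, F (Teqv d ε x) := by
  rw [← Teqv_preimage d ε]
  exact ((Teqv_mp d ε).setIntegral_preimage_emb (Teqv d ε).measurableEmbedding F _).symm

lemma decomp (d : ℕ) (F : (Fin d → ℝ) → ℂ) (hF : IntegrableOn F (Icc (-1 : Fin d → ℝ) 1)) :
    ∫ x in Icc (-1 : Fin d → ℝ) 1, F x
      = ∑ ε : Fin d → Bool, ∫ x in Icc (0 : Fin d → ℝ) 1, F (Teqv d ε x) := by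
  rw [← SBox_iUnion d, integral_iUnion_ae (fun ε => (SBox_meas d ε).nullMeasurableSet)
    (SBox_aedisjoint d) (by rwa [SBox_iUnion]), tsum_fintype]
  exact Finset.sum_congr rfl fun ε _ => setIntegral_SBox d ε F

lemma norm_expFactor (d : ℕ) (c : Fin d → ℝ) (x : Fin d → ℝ) :
    ‖Complex.exp (-(Complex.I * (Real.pi : ℂ)) * ∑ i, (c i : ℂ) * (x i : ℂ))‖ = 1 := by
  have h : (∑ i, (c i : ℂ) * (x i : ℂ)) = ((∑ i, c i * x i : ℝ) : ℂ) := by push_cast; ring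
  rw [h, Complex.norm_exp]
  have : (-(Complex.I * (Real.pi : ℂ)) * ((∑ i, c i * x i : ℝ) : ℂ)).re = 0 := by
    simp [Complex.mul_re]
  rw [this, Real.exp_zero]

lemma integrableOn_mul_exp (d : ℕ) (f : (Fin d → ℝ) → ℂ) {s : Set (Fin d → ℝ)}
    (hf : IntegrableOn f s) (c : Fin d → ℝ) :
    IntegrableOn (fun x => f x *
      Complex.exp (-(Complex.I * (Real.pi : ℂ)) * ∑ i, (c i : ℂ) * (x i : ℂ))) s := by
  have hm : AEStronglyMeasurable
      (fun x : Fin d → ℝ =>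
        Complex.exp (-(Complex.I * (Real.pi : ℂ)) * ∑ i, (c i : ℂ) * (x i : ℂ)))
      (volume.restrict s) := by
    apply Continuous.aestronglyMeasurable
    apply Complex.continuous_exp.comp
    apply Continuous.mul continuous_const
    exact continuous_finset_sum _ fun i _ =>
      (Continuous.mul continuous_const ((Complex.continuous_ofReal.comp (continuous_apply i))))
  have h := hf.bdd_mul hm (Filter.Eventually.of_forall fun x => le_of_eq (norm_expFactor d c x))
  exact h.congr (Filter.Eventually.of_forall fun x => mul_comm _ _)

/-- On `Icc 0 1`, composing the periodized integrand with `Teqv d ε` gives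
`f x * exp(-iπ ∑ σᵢ kᵢ xᵢ)`. -/
noncomputable def sgn (b : Bool) : ℝ := if b then 1 else -1

lemma comp_eqOn (d : ℕ) (f : (Fin d → ℝ) → ℂ) (k : Fin d → ℤ) (ε : Fin d → Bool) :
    EqOn (fun x => (fun y => f (fun i => |y i|) *
        Complex.exp (-(Complex.I * (Real.pi : ℂ)) * ∑ i, (k i : ℂ) * (y i : ℂ))) (Teqv d ε x))
      (fun x => f x * Complex.exp (-(Complex.I * (Real.pi : ℂ)) *
        ∑ i, ((sgn (ε i) * (k i : ℝ) : ℝ) : ℂ) * (x i : ℂ)))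
      (Icc (0 : Fin d → ℝ) 1) := by
  intro x hx
  rw [← pi_univ_Icc] at hx
  simp only [mem_pi, mem_univ, true_implies] at hx
  have habs : (fun i => |Teqv d ε x i|) = x := by
    funext i
    rw [Teqv_apply]
    have h0 : (0 : ℝ) ≤ x i := by simpa using (hx i).1
    cases h : ε i
    · simp only [Bool.false_eq_true, if_false]
      rw [abs_neg, abs_of_nonneg h0]
    · simp only [if_true]
      exact abs_of_nonneg h0
  have hsum : ∑ i, (k i : ℂ) * ((Teqv d ε x i : ℝ) : ℂ)
      = ∑ i, ((sgn (ε i) * (k i : ℝ) : ℝ) : ℂ) * (x i : ℂ) := by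
    refine Finset.sum_congr rfl fun i _ => ?_
    rw [Teqv_apply]
    cases h : ε i <;> simp [sgn, h] <;> push_cast <;> ring
  simp only
  rw [habs, hsum]

lemma two_cos_eq (θ : ℝ) :
    Complex.exp (-(Complex.I * (θ : ℂ))) + Complex.exp (Complex.I * (θ : ℂ))
      = ((2 * Real.cos θ : ℝ) : ℂ) := by
  have h1 : -(Complex.I * (θ : ℂ)) = ((-θ : ℝ) : ℂ) * Complex.I := by push_cast; ring
  have h2 : Complex.I * (θ : ℂ) = ((θ : ℝ) : ℂ) * Complex.I := by ring
  rw [h1, h2, Complex.exp_mul_I, Complex.exp_mul_I]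
  push_cast
  simp [Complex.cos_neg, Complex.sin_neg]
  ring

lemma sum_exp_eq (d : ℕ) (k : Fin d → ℤ) (x : Fin d → ℝ) :
    ∑ ε : Fin d → Bool, Complex.exp (-(Complex.I * (Real.pi : ℂ)) *
        ∑ i, ((sgn (ε i) * (k i : ℝ) : ℝ) : ℂ) * (x i : ℂ))
      = ∏ i, ((2 * Real.cos (Real.pi * (k i : ℝ) * x i) : ℝ) : ℂ) := by
  have hexp : ∀ ε : Fin d → Bool,
      Complex.exp (-(Complex.I * (Real.pi : ℂ)) *
          ∑ i, ((sgn (ε i) * (k i : ℝ) : ℝ) : ℂ) * (x i : ℂ))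
        = ∏ i, Complex.exp (-(Complex.I * (Real.pi : ℂ)) *
            (((sgn (ε i) * (k i : ℝ) : ℝ) : ℂ) * (x i : ℂ))) := by
    intro ε
    rw [Finset.mul_sum, Complex.exp_sum]
  simp_rw [hexp]
  rw [show (Finset.univ : Finset (Fin d → Bool))
      = Fintype.piFinset (fun _ => (Finset.univ : Finset Bool)) from
      (Fintype.piFinset_univ).symm,
    Finset.sum_prod_piFinset (Finset.univ : Finset Bool)
      (fun i b => Complex.exp (-(Complex.I * (Real.pi : ℂ)) *
        (((sgn b * (k i : ℝ) : ℝ) : ℂ) * (x i : ℂ))))]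
  refine Finset.prod_congr rfl fun i _ => ?_
  rw [Fintype.sum_bool]
  have ht : -(Complex.I * (Real.pi : ℂ)) * (((sgn true * (k i : ℝ) : ℝ) : ℂ) * (x i : ℂ))
      = -(Complex.I * ((Real.pi * (k i : ℝ) * x i : ℝ) : ℂ)) := by
    simp [sgn]; push_cast; ring
  have hf : -(Complex.I * (Real.pi : ℂ)) * (((sgn false * (k i : ℝ) : ℝ) : ℂ) * (x i : ℂ))
      = Complex.I * ((Real.pi * (k i : ℝ) * x i : ℝ) : ℂ) := by
    simp [sgn]; push_cast; ring
  rw [ht, hf, two_cos_eq]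

lemma prod_two_cos (d : ℕ) (k : Fin d → ℤ) (x : Fin d → ℝ) :
    ∏ i, (2 * Real.cos (Real.pi * (k i : ℝ) * x i))
      = (∏ i, (if k i = 0 then (2:ℝ) else Real.sqrt 2)) * hpc d (fun i => (k i).natAbs) x := by
  rw [hpc, ← Finset.prod_mul_distrib]
  refine Finset.prod_congr rfl fun i _ => ?_
  by_cases h : k i = 0
  · simp [h, hpcFun]
  · have hna : (k i).natAbs ≠ 0 := by simpa using h
    simp only [if_neg h, hpcFun, if_neg hna]
    have hs : Real.sqrt 2 * Real.sqrt 2 = 2 := Real.mul_self_sqrt (by norm_num)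
    have hcast : (((k i).natAbs : ℕ) : ℝ) = |(k i : ℝ)| := by
      rw [Nat.cast_natAbs, Int.cast_abs]
    have hcos : Real.cos (Real.pi * (((k i).natAbs : ℕ) : ℝ) * x i)
        = Real.cos (Real.pi * (k i : ℝ) * x i) := by
      rw [hcast]
      rcases abs_choice ((k i : ℝ)) with hab | hab
      · rw [hab]
      · rw [hab]
        rw [show Real.pi * -(k i : ℝ) * x i = -(Real.pi * (k i : ℝ) * x i) by ring,
          Real.cos_neg]
    rw [← mul_assoc, hs, ← hcos]

lemma const_prod (d : ℕ) (k : Fin d → ℤ) :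
    ((2:ℝ) ^ (((nzCount d k : ℝ) - d) / 2) * (2:ℝ) ^ (-(d:ℝ) / 2)) *
      ∏ i, (if k i = 0 then (2:ℝ) else Real.sqrt 2) = 1 := by
  classical
  have hn : nzCount d k ≤ d := by
    simpa [nzCount] using (Finset.card_filter_le Finset.univ fun i => k i ≠ 0)
  have hprod : ∏ i, (if k i = 0 then (2:ℝ) else Real.sqrt 2)
      = 2 ^ (d - nzCount d k) * Real.sqrt 2 ^ (nzCount d k) := by
    rw [Finset.prod_ite (fun _ => (2:ℝ)) (fun _ => Real.sqrt 2), Finset.prod_const,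
      Finset.prod_const]
    have hcard : (Finset.univ.filter fun i => k i = 0).card = d - nzCount d k := by
      have h := Finset.card_filter_add_card_filter_not
        (s := (Finset.univ : Finset (Fin d))) (p := fun i => k i = 0)
      simp only [Finset.card_univ, Fintype.card_fin] at h
      have h2 : (Finset.univ.filter fun i => ¬ k i = 0).card = nzCount d k := rfl
      omega
    rw [hcard]
    norm_num [nzCount]
  rw [hprod, Real.sqrt_eq_rpow,
    ← Real.rpow_natCast ((2:ℝ) ^ ((1:ℝ)/2)) (nzCount d k),
    ← Real.rpow_mul (by norm_num : (0:ℝ) ≤ 2),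
    ← Real.rpow_natCast (2:ℝ) (d - nzCount d k),
    ← Real.rpow_add (by norm_num : (0:ℝ) < 2),
    ← Real.rpow_add (by norm_num : (0:ℝ) < 2),
    ← Real.rpow_add (by norm_num : (0:ℝ) < 2),
    Nat.cast_sub hn]
  rw [show ((nzCount d k : ℝ) - d) / 2 + -(d:ℝ) / 2 + ((d:ℝ) - nzCount d k
      + 1 / 2 * (nzCount d k : ℝ)) = 0 by ring]
  exact Real.rpow_zero 2

lemma integrable_F (d : ℕ) (f : (Fin d → ℝ) → ℂ) (hf : IntegrableOn f (Icc 0 1))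
    (k : Fin d → ℤ) :
    IntegrableOn (fun x => f (fun i => |x i|) *
      Complex.exp (-(Complex.I * (Real.pi : ℂ)) * ∑ i, (k i : ℂ) * (x i : ℂ)))
      (Icc (-1 : Fin d → ℝ) 1) := by
  rw [← SBox_iUnion d]
  refine integrableOn_finite_iUnion.mpr fun ε => ?_
  rw [← (Teqv_mp d ε).integrableOn_comp_preimage (Teqv d ε).measurableEmbedding,
    Teqv_preimage]
  have h := integrableOn_mul_exp d f hf (fun i => sgn (ε i) * (k i : ℝ))
  exact h.congr_fun (comp_eqOn d f k ε).symm measurableSet_Icc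

lemma key_real (d : ℕ) (k : Fin d → ℤ) (x : Fin d → ℝ) :
    ((2:ℝ) ^ (((nzCount d k : ℝ) - d) / 2) * (2:ℝ) ^ (-(d:ℝ) / 2)) *
      ∏ i, (2 * Real.cos (Real.pi * (k i : ℝ) * x i))
      = hpc d (fun i => (k i).natAbs) x := by
  rw [prod_two_cos, ← mul_assoc, const_prod, one_mul]


/-- For `f ∈ L¹([0,1]^d)` the half-period cosine coefficient of `f` at `|k̄|` and the
`k̄`-th Fourier coefficient of the periodization `𝒫f` are related by
`∫_{[0,1]^d} f c_{|k̄|} = 2^{(|k̄|₀-d)/2} · 2^{-d/2} ∫_{[-1,1]^d} 𝒫f(x) e^{-iπ k̄·x} dx`. -/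
theorem statement4 (d : ℕ) (f : (Fin d → ℝ) → ℂ)
    (hf : IntegrableOn f (Icc 0 1)) (k : Fin d → ℤ) :
    ∫ x in Icc (0 : Fin d → ℝ) 1, f x * (hpc d (fun i => (k i).natAbs) x : ℂ) =
      (((2 : ℝ) ^ (((nzCount d k : ℝ) - d) / 2) * (2 : ℝ) ^ (-(d : ℝ) / 2) : ℝ) : ℂ) *
        ∫ x in Icc (-1 : Fin d → ℝ) 1,
          f (fun i => |x i|) *
            Complex.exp (-(Complex.I * (Real.pi : ℂ)) * ∑ i, (k i : ℂ) * (x i : ℂ)) := by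
  symm
  set C : ℝ := (2 : ℝ) ^ (((nzCount d k : ℝ) - d) / 2) * (2 : ℝ) ^ (-(d : ℝ) / 2) with hC
  calc ((C : ℝ) : ℂ) * ∫ x in Icc (-1 : Fin d → ℝ) 1,
          f (fun i => |x i|) *
            Complex.exp (-(Complex.I * (Real.pi : ℂ)) * ∑ i, (k i : ℂ) * (x i : ℂ))
      = (C : ℂ) * ∑ ε : Fin d → Bool, ∫ x in Icc (0 : Fin d → ℝ) 1,
          f x * Complex.exp (-(Complex.I * (Real.pi : ℂ)) *
            ∑ i, ((sgn (ε i) * (k i : ℝ) : ℝ) : ℂ) * (x i : ℂ)) := by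
        rw [decomp d _ (integrable_F d f hf k)]
        congr 1
        exact Finset.sum_congr rfl fun ε _ =>
          setIntegral_congr_fun measurableSet_Icc (comp_eqOn d f k ε)
    _ = (C : ℂ) * ∫ x in Icc (0 : Fin d → ℝ) 1, ∑ ε : Fin d → Bool,
          f x * Complex.exp (-(Complex.I * (Real.pi : ℂ)) *
            ∑ i, ((sgn (ε i) * (k i : ℝ) : ℝ) : ℂ) * (x i : ℂ)) := by
        rw [integral_finset_sum _ fun ε _ => integrableOn_mul_exp d f hf _]
    _ = ∫ x in Icc (0 : Fin d → ℝ) 1,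
          (C : ℂ) * (f x * ((∏ i, (2 * Real.cos (Real.pi * (k i : ℝ) * x i) : ℝ) : ℝ) : ℂ)) := by
        rw [← integral_const_mul]
        refine setIntegral_congr_fun measurableSet_Icc fun x _ => ?_
        rw [← Finset.mul_sum, sum_exp_eq, Complex.ofReal_prod]
    _ = ∫ x in Icc (0 : Fin d → ℝ) 1, f x * (hpc d (fun i => (k i).natAbs) x : ℂ) := by
        refine setIntegral_congr_fun measurableSet_Icc fun x _ => ?_
        rw [← key_real d k x, Complex.ofReal_mul C _]
        exact mul_left_comm _ _ _
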